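/- Let u = u_1 u_2 ⋯ u_N be a cyclic universal partial word for A^n with A = {0,1,…,α-1} and n ≥ 2 (indices taken modulo N). If u_k = ◊ then u_{k+n} = ◊. -/

import Mathlib

/-- A partial-word symbol over the alphabet `Fin α`: `none` is the wildcard `◊`. -/
abbrev PSym (α : ℕ) := Option (Fin α)

/-- The word `v ∈ A^*` appears as a factor of the partial word `u` at 0-based position `i`:
each symbol of `u` in the window is either `◊` or equals the corresponding letter of `v`. -/
def MatchAt {α : ℕ} (u : List (PSym α)) (v : List (Fin α)) (i : ℕ) : Prop :=
  i + v.length ≤ u.length ∧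
    ∀ j < v.length, u[i + j]? = some none ∨ u[i + j]? = (v[j]?).map some

/-- `u` is a linear universal partial word (upword) for `A^n`, `A = Fin α`:
every word of length `n` over `A` appears exactly once as a factor. -/
def IsLinearUpword (α n : ℕ) (u : List (PSym α)) : Prop :=
  ∀ v : List (Fin α), v.length = n → ∃! i : ℕ, MatchAt u v i

/-- `v` appears as a cyclic factor of the partial word `u` at position `i`
(indices taken modulo `u.length`). -/
def CycMatchAt {α : ℕ} (u : List (PSym α)) (v : List (Fin α)) (i : ℕ) : Prop :=
  ∀ j < v.length,
    u[(i + j) % u.length]? = some none ∨ u[(i + j) % u.length]? = (v[j]?).map some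

/-- `u` is a cyclic universal partial word for `A^n`: every word of length `n` over `A`
appears exactly once as a cyclic factor. -/
def IsCyclicUpword (α n : ℕ) (u : List (PSym α)) : Prop :=
  ∀ v : List (Fin α), v.length = n → ∃! i : ℕ, i < u.length ∧ CycMatchAt u v i

/-- Let `u` be a cyclic upword for `A^n`, `A = {0,…,α-1}`, `n ≥ 2`
(indices modulo `u.length`). If `u_k = ◊` then `u_{k+n} = ◊`. -/
theorem cyclic_upword_diamond_shift (α n : ℕ) (hα : 2 ≤ α) (hn : 2 ≤ n)
    (u : List (PSym α)) (hu : IsCyclicUpword α n u)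
    (k : ℕ) (hk : k < u.length) (h : u[k]? = some none) :
    u[(k + n) % u.length]? = some none := by
  by_contra hcon
  set N := u.length with hNdef
  have hN : 0 < N := by omega
  have hltkn : (k + n) % N < N := Nat.mod_lt _ hN
  obtain ⟨a, ha⟩ : ∃ a : Fin α, u[(k+n) % N]? = some (some a) := by
    have hx := List.getElem?_eq_getElem hltkn
    cases hval : u[(k+n) % N]'hltkn with
    | none => rw [hval] at hx; exact absurd hx hcon
    | some a => rw [hval] at hx; exact ⟨a, hx⟩
  have hz : (0 : ℕ) < α := by omega
  have ho : (1 : ℕ) < α := by omega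
  set z : Fin α := ⟨0, hz⟩ with hzdef
  set b : Fin α := if a.val = 0 then ⟨1, ho⟩ else z with hbdef
  have hba : b ≠ a := by
    rw [hbdef]
    split <;> rename_i hcase <;> intro hEq
    · have := congrArg Fin.val hEq; simp at this; omega
    · have := congrArg Fin.val hEq; simp [hzdef] at this; omega
  -- the letter read at position p (0 at diamonds)
  set g : ℕ → Fin α := fun p => ((u[p % N]?).getD none).getD z with hgdef
  have hg : ∀ p, u[p % N]? = some none ∨ u[p % N]? = some (some (g p)) := by
    intro p
    have hl : p % N < N := Nat.mod_lt _ hN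
    have hx := List.getElem?_eq_getElem hl
    cases hval : u[p % N]'hl with
    | none => left; rw [hval] at hx; exact hx
    | some c =>
      right; rw [hval] at hx; rw [hx]
      simp [hgdef, hx]
  set f : List (Fin α) := (List.range (n-1)).map (fun j => g (k+1+j)) with hfdef
  have hf_len : f.length = n - 1 := by simp [hfdef]
  have hf_get : ∀ j < n - 1, f[j]? = some (g (k+1+j)) := by
    intro j hj
    simp [hfdef, List.getElem?_map, List.getElem?_range, hj]
  set v : List (Fin α) := f ++ [b] with hvdef
  have hv_len : v.length = n := by simp [hvdef, hf_len]; omega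
  obtain ⟨q, ⟨hqN, hqm⟩, hquniq⟩ := hu v hv_len
  -- v does not match at (k+1) % N
  have hq_ne : q ≠ (k+1) % N := by
    intro hEq
    have hm := hqm (n-1) (by omega)
    rw [hEq] at hm
    have hpos : ((k+1) % N + (n-1)) % N = (k+n) % N := by
      rw [Nat.mod_add_mod]
      congr 1; omega
    have hvlast : v[n-1]? = some b := by
      have : v[f.length]? = some b := by
        rw [hvdef]; exact List.getElem?_concat_length (l := f) (a := b)
      rwa [hf_len] at this
    rw [hpos, hvlast, ha] at hm
    rcases hm with hm | hm <;> simp at hm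
    exact hba hm.symm
  -- the word (g q') :: f matches at both k and q' = (q + (N-1)) % N
  set q' : ℕ := (q + (N-1)) % N with hq'def
  set w : List (Fin α) := g q' :: f with hwdef
  have hw_len : w.length = n := by simp [hwdef, hf_len]; omega
  have hw0 : w[0]? = some (g q') := by rw [hwdef]; simp
  have hwk : CycMatchAt u w k := by
    intro j hj
    rw [hw_len] at hj
    match j with
    | 0 =>
      left
      rw [Nat.add_zero, Nat.mod_eq_of_lt hk]
      exact h
    | (j' + 1) =>
      have hj' : j' < n - 1 := by omega
      have hpos : (k + (j'+1)) % N = (k+1+j') % N := by congr 1; omega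
      have hw_get : w[j'+1]? = some (g (k+1+j')) := by
        rw [hwdef]
        simpa using hf_get j' hj'
      rw [hpos, hw_get]
      rcases hg (k+1+j') with hx | hx
      · left; exact hx
      · right; rw [hx]; rfl
  have hwq' : CycMatchAt u w q' := by
    intro j hj
    rw [hw_len] at hj
    match j with
    | 0 =>
      rw [Nat.add_zero, hw0]
      rcases hg q' with hx | hx
      · left; exact hx
      · right; rw [hx]; rfl
    | (j' + 1) =>
      have hj' : j' < n - 1 := by omega
      have hpos : (q' + (j'+1)) % N = (q + j') % N := by
        rw [hq'def, Nat.mod_add_mod]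
        have : q + (N-1) + (j'+1) = q + j' + N := by omega
        rw [this, Nat.add_mod_right]
      have hw_get : w[j'+1]? = some (g (k+1+j')) := by
        rw [hwdef]; simpa using hf_get j' hj'
      have hv_get : v[j']? = some (g (k+1+j')) := by
        rw [hvdef, List.getElem?_append_left (by omega : j' < f.length)]
        exact hf_get j' hj'
      have hm := hqm j' (by rw [hv_len]; omega)
      rw [hv_get] at hm
      rw [hpos, hw_get]
      exact hm
  obtain ⟨i₀, _, hiuniq⟩ := hu w hw_len
  have hq'N : q' < N := Nat.mod_lt _ hN
  have hkq' : k = q' := by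
    have h1 := hiuniq k ⟨hk, hwk⟩
    have h2 := hiuniq q' ⟨hq'N, hwq'⟩
    omega
  apply hq_ne
  have : (k + 1) % N = q := by
    rw [hkq', hq'def, Nat.mod_add_mod]
    have : q + (N-1) + 1 = q + N := by omega
    rw [this, Nat.add_mod_right, Nat.mod_eq_of_lt hqN]
  omega
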